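/- Every categorical semigroup S is totalization-compatible with an ℓr-category structure: S \ {0} with composition restricted to pairs with x·y ≠ 0 and the restricted maps ℓ, r satisfies the ℓr-category axioms, with D(x,y) ↔ r x = ℓ y. -/
import Mathlib

theorem stmt19 {S : Type*} [Semigroup S] (z : S) (l r : S → S)
    (h1 : ∀ x : S, r (l x) = l x) (h2 : ∀ x : S, l (r x) = r x)
    (h3 : ∀ x : S, l x * x = x) (h4 : ∀ x : S, x * r x = x)
    (h5 : r z = z)
    (h6 : ∀ x y : S, x * y ≠ z ↔ x ≠ z ∧ y ≠ z ∧ r x = l y) :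
    (∀ x : S, x ≠ z →
      l x ≠ z ∧ r x ≠ z ∧ r (l x) = l x ∧ l (r x) = r x ∧
      l x * x = x ∧ x * r x = x) ∧
    (∀ x y : S, x ≠ z → y ≠ z → (x * y ≠ z ↔ r x = l y)) ∧
    (∀ x y : S, x ≠ z → y ≠ z → r x = l y →
      l (x * y) = l x ∧ r (x * y) = r y) ∧
    (∀ x y w : S, x ≠ z → y ≠ z → w ≠ z → r x = l y → r y = l w →
      (x * y) * w = x * (y * w)) := by
  refine ⟨?_, ?_, ?_, ?_⟩
  · intro x hx
    have hlx : l x * x ≠ z := by rw [h3]; exact hx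
    have hrx : x * r x ≠ z := by rw [h4]; exact hx
    exact ⟨((h6 _ _).1 hlx).1, ((h6 _ _).1 hrx).2.1, h1 x, h2 x, h3 x, h4 x⟩
  · intro x y hx hy
    constructor
    · intro h; exact ((h6 _ _).1 h).2.2
    · intro h; exact (h6 _ _).2 ⟨hx, hy, h⟩
  · intro x y hx hy hd
    have hxy : x * y ≠ z := (h6 _ _).2 ⟨hx, hy, hd⟩
    constructor
    · have : l x * (x * y) ≠ z := by rw [← mul_assoc, h3]; exact hxy
      have := ((h6 _ _).1 this).2.2
      rw [h1] at this; exact this.symm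
    · have : (x * y) * r y ≠ z := by rw [mul_assoc, h4]; exact hxy
      have := ((h6 _ _).1 this).2.2
      rw [h2] at this; exact this
  · intro x y w _ _ _ _ _; exact mul_assoc x y w
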